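/- arXiv:2210.02566 — 11 statements merged into one kernel-verified Lean document; each statement's English description precedes it below -/
import Mathlib

section
/- Let d_R(t), d_S(t) be formal power series over a field of characteristic zero with d_R(0) ≠ 0, d_S(0) ≠ 0, d_R(0) + d_S(0) ≠ 0, and let h(t) be a formal power series with h(0) = 0 and h'(0) ≠ 0 admitting a compositional inverse h̄(t) (so h(h̄(t)) = t = h̄(h(t))). Suppose Z_R, Z_S, Z are formal power series satisfying the Z-sequence relations d_R(t) − d_R(0) = t·d_R(t)·Z_R(h(t)), d_S(t) − d_S(0) = t·d_S(t)·Z_S(h(t)), and (d_R(t)+d_S(t)) − (d_R(0)+d_S(0)) = t·(d_R(t)+d_S(t))·Z(h(t)). Then Z satisfies the weighted-average formula: (d_R(h̄(t)) + d_S(h̄(t)))·Z(t) = d_R(h̄(t))·Z_R(t) + d_S(h̄(t))·Z_S(t). -/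
open PowerSeries Finset

/-- Composition (substitution) `f(g(t))` of formal power series, which is the
honest substitution whenever the inner series `g` has zero constant term:
the coefficient of `t^n` in `f(g)` is `∑_{k=0}^{n} f_k · [t^n](g^k)`. -/
noncomputable def PowerSeries.compose {R : Type*} [CommSemiring R] (f g : R⟦X⟧) : R⟦X⟧ :=
  PowerSeries.mk fun n => ∑ k ∈ Finset.range (n + 1), coeff k f * coeff n (g ^ k)

namespace PowerSeries

variable {K : Type*} [CommRing K]

lemma coeff_compose (f g : K⟦X⟧) (n : ℕ) :
    coeff n (f.compose g) = ∑ k ∈ Finset.range (n + 1), coeff k f * coeff n (g ^ k) := by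
  simp [compose]

lemma coeff_pow_eq_zero' {g : K⟦X⟧} (hg : constantCoeff g = 0) {j k : ℕ} (h : j < k) :
    coeff j (g ^ k) = 0 := by
  have hd : (X : K⟦X⟧) ^ k ∣ g ^ k := pow_dvd_pow_of_dvd (X_dvd_iff.mpr hg) k
  exact (X_pow_dvd_iff.mp hd) j h

lemma compose_sub (f g p : K⟦X⟧) : (f - g).compose p = f.compose p - g.compose p := by
  ext n
  simp [coeff_compose, sub_mul, Finset.sum_sub_distrib]

lemma compose_add (f g p : K⟦X⟧) : (f + g).compose p = f.compose p + g.compose p := by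
  ext n
  simp [coeff_compose, add_mul, Finset.sum_add_distrib]

lemma compose_C (a : K) (p : K⟦X⟧) : (C a).compose p = C a := by
  ext n
  rw [coeff_compose]
  rcases Nat.eq_zero_or_pos n with rfl | hn
  · simp
  · rw [Finset.sum_eq_zero, coeff_C, if_neg hn.ne']
    intro k hk
    rcases Nat.eq_zero_or_pos k with rfl | hk0
    · simp [coeff_C, hn.ne']
    · simp [coeff_C, hk0.ne']

lemma compose_X {p : K⟦X⟧} (hp : constantCoeff p = 0) : (X : K⟦X⟧).compose p = p := by
  ext n
  rw [coeff_compose]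
  rcases Nat.eq_zero_or_pos n with rfl | hn
  · simp [hp]
  · rw [Finset.sum_eq_single 1]
    · simp
    · intro k hk hk1
      rcases Nat.eq_zero_or_pos k with rfl | hk0
      · simp
      · rw [coeff_X, if_neg (by omega), zero_mul]
    · intro hmem
      simp at hmem; omega

lemma coeff_aeval {p : K⟦X⟧} (hp : constantCoeff p = 0) (q : Polynomial K) (n : ℕ) :
    coeff n (Polynomial.aeval p q) = ∑ k ∈ Finset.range (n + 1), q.coeff k * coeff n (p ^ k) := by
  set N := max (q.natDegree + 1) (n + 1) with hN
  rw [Polynomial.aeval_eq_sum_range' (n := N) (by omega) p]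
  rw [map_sum]
  have : ∀ k ∈ Finset.range N, coeff n (q.coeff k • p ^ k) = q.coeff k * coeff n (p ^ k) := by
    intro k _; simp
  rw [Finset.sum_congr rfl this]
  refine (Finset.sum_subset (Finset.range_subset_range.mpr (by omega)) fun k _ hk => ?_).symm
  simp only [Finset.mem_range, not_lt] at hk
  rw [coeff_pow_eq_zero' hp (by omega), mul_zero]

lemma coeff_compose_eq_aeval_trunc {p : K⟦X⟧} (hp : constantCoeff p = 0) (f : K⟦X⟧)
    {m N : ℕ} (hm : m < N) :
    coeff m (f.compose p) = coeff m (Polynomial.aeval p (trunc N f)) := by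
  rw [coeff_compose, coeff_aeval hp]
  refine Finset.sum_congr rfl fun k hk => ?_
  simp only [Finset.mem_range] at hk
  rw [coeff_trunc, if_pos (by omega)]

lemma compose_mul {p : K⟦X⟧} (hp : constantCoeff p = 0) (f g : K⟦X⟧) :
    (f * g).compose p = f.compose p * g.compose p := by
  ext n
  rw [coeff_compose_eq_aeval_trunc hp _ (Nat.lt_succ_self n)]
  rw [PowerSeries.coeff_mul]
  have h1 : ∀ ab ∈ HasAntidiagonal.antidiagonal n,
      coeff ab.1 (f.compose p) * coeff ab.2 (g.compose p) =
      coeff ab.1 (Polynomial.aeval p (trunc (n+1) f)) *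
      coeff ab.2 (Polynomial.aeval p (trunc (n+1) g)) := by
    intro ab hab
    have := Finset.HasAntidiagonal.antidiagonal.fst_le hab
    have := Finset.HasAntidiagonal.antidiagonal.snd_le hab
    rw [coeff_compose_eq_aeval_trunc hp f (N := n+1) (by omega),
      coeff_compose_eq_aeval_trunc hp g (N := n+1) (by omega)]
  rw [Finset.sum_congr rfl h1, ← PowerSeries.coeff_mul, ← map_mul]
  rw [coeff_aeval hp, coeff_aeval hp]
  refine Finset.sum_congr rfl fun k hk => ?_
  simp only [Finset.mem_range] at hk
  congr 1
  rw [Polynomial.coeff_mul, coeff_trunc, if_pos (by omega), PowerSeries.coeff_mul]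
  refine Finset.sum_congr rfl fun ab hab => ?_
  have := Finset.HasAntidiagonal.antidiagonal.fst_le hab
  have := Finset.HasAntidiagonal.antidiagonal.snd_le hab
  rw [coeff_trunc, if_pos (by omega), coeff_trunc, if_pos (by omega)]

lemma compose_one (p : K⟦X⟧) : (1 : K⟦X⟧).compose p = 1 := by
  rw [← map_one (C (R := K)), compose_C, map_one]

lemma compose_pow {p : K⟦X⟧} (hp : constantCoeff p = 0) (g : K⟦X⟧) (k : ℕ) :
    (g ^ k).compose p = (g.compose p) ^ k := by
  induction k with
  | zero => simpa using compose_one p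
  | succ k ih => rw [pow_succ, compose_mul hp, ih, pow_succ]

lemma compose_assoc {g p : K⟦X⟧} (hg : constantCoeff g = 0) (hp : constantCoeff p = 0)
    (f : K⟦X⟧) : (f.compose g).compose p = f.compose (g.compose p) := by
  ext n
  rw [coeff_compose, coeff_compose]
  have h1 : ∀ k ∈ Finset.range (n+1),
      coeff k f * coeff n ((g.compose p) ^ k) =
      ∑ j ∈ Finset.range (n+1), coeff k f * (coeff j (g ^ k) * coeff n (p ^ j)) := by
    intro k _
    rw [← compose_pow hp, coeff_compose, Finset.mul_sum]
  rw [Finset.sum_congr rfl h1]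
  have h2 : ∀ j ∈ Finset.range (n+1),
      coeff j (f.compose g) * coeff n (p ^ j) =
      ∑ k ∈ Finset.range (n+1), coeff k f * coeff j (g ^ k) * coeff n (p ^ j) := by
    intro j hj
    simp only [Finset.mem_range] at hj
    rw [coeff_compose, Finset.sum_mul]
    refine Finset.sum_subset (Finset.range_subset_range.mpr (by omega)) fun k _ hk => ?_
    simp only [Finset.mem_range, not_lt] at hk
    rw [coeff_pow_eq_zero' hg (by omega), mul_zero, zero_mul]
  rw [Finset.sum_congr rfl h2, Finset.sum_comm]
  refine Finset.sum_congr rfl fun k _ => Finset.sum_congr rfl fun j hj => ?_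
  · by_cases hjk : j < k
    · rw [coeff_pow_eq_zero' hg hjk]; ring
    · ring

lemma compose_X_right (f : K⟦X⟧) : f.compose X = f := by
  ext n
  rw [coeff_compose, Finset.sum_eq_single n]
  · rw [coeff_X_pow, if_pos rfl, mul_one]
  · intro k hk hkn
    rw [coeff_X_pow, if_neg (fun h => hkn h.symm), mul_zero]
  · intro h; simp at h

end PowerSeries

/-- the Z-sequence of the sum `R + S` of two Riordan arrays with a
common `h(t)` is the weighted average of the individual Z-sequences:
`(dR(h̄) + dS(h̄))·Z = dR(h̄)·Z_R + dS(h̄)·Z_S`. -/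
theorem zseq_sum_weighted_average {K : Type*} [Field K] [CharZero K]
    (dR dS h hbar ZR ZS Z : K⟦X⟧)
    (hdR : constantCoeff dR ≠ 0) (hdS : constantCoeff dS ≠ 0)
    (hdRS : constantCoeff dR + constantCoeff dS ≠ 0)
    (hh0 : constantCoeff h = 0) (hh1 : coeff 1 h ≠ 0)
    (hbar0 : constantCoeff hbar = 0)
    (hinv1 : h.compose hbar = X) (hinv2 : hbar.compose h = X)
    (hZR : dR - C (constantCoeff dR) = X * dR * ZR.compose h)
    (hZS : dS - C (constantCoeff dS) = X * dS * ZS.compose h)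
    (hZ : (dR + dS) - C (constantCoeff dR + constantCoeff dS) =
        X * (dR + dS) * Z.compose h) :
    (dR.compose hbar + dS.compose hbar) * Z =
      dR.compose hbar * ZR + dS.compose hbar * ZS := by
  have hcR := congrArg (fun x : K⟦X⟧ => x.compose hbar) hZR
  have hcS := congrArg (fun x : K⟦X⟧ => x.compose hbar) hZS
  have hcZ := congrArg (fun x : K⟦X⟧ => x.compose hbar) hZ
  simp only [compose_sub, compose_add, compose_C, compose_mul hbar0, compose_X hbar0,
    compose_assoc hh0 hbar0, hinv1, compose_X_right] at hcR hcS hcZ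
  rw [map_add] at hcZ
  have hbne : hbar ≠ 0 := by
    intro h0
    rw [h0] at hinv2
    have : (0 : K⟦X⟧).compose h = 0 := by
      ext n; simp [coeff_compose]
    rw [this] at hinv2
    exact X_ne_zero hinv2.symm
  have key : hbar * ((dR.compose hbar + dS.compose hbar) * Z) =
      hbar * (dR.compose hbar * ZR + dS.compose hbar * ZS) := by
    linear_combination hcR + hcS - hcZ
  exact mul_left_cancel₀ hbne key
end

section
/- For every natural number n, 5·(∑_{k=0}^{n} F_k·F_{n−k}) = (3n+5)·F_n + (n+1)·F_{n−1}, where F_i denotes the Fibonacci number with convention F_0 = F_1 = 1, F_i = F_{i−1} + F_{i−2} (so F_i = fib(i+1) in the convention fib(0)=0, fib(1)=1), and F_{−1} is interpreted as fib(0) = 0. Equivalently: 5·∑_{k=0}^{n} fib(k+1)·fib(n−k+1) = (3n+5)·fib(n+1) + (n+1)·fib(n). -/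
private def S (n : ℕ) : ℕ := ∑ k ∈ Finset.range (n + 1), Nat.fib (k + 1) * Nat.fib (n - k + 1)

private lemma S_rec (n : ℕ) : S (n + 2) = S (n + 1) + S n + Nat.fib (n + 3) := by
  have h1 : S (n + 2) = (∑ k ∈ Finset.range (n + 2), Nat.fib (k + 1) * Nat.fib (n + 2 - k + 1))
      + Nat.fib (n + 3) := by
    rw [S, Finset.sum_range_succ]
    simp
  have h2 : ∀ k ∈ Finset.range (n + 2), Nat.fib (k + 1) * Nat.fib (n + 2 - k + 1) =
      Nat.fib (k + 1) * Nat.fib (n + 1 - k + 1) + Nat.fib (k + 1) * Nat.fib (n + 1 - k) := by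
    intro k hk
    rw [Finset.mem_range] at hk
    have : n + 2 - k + 1 = (n + 1 - k) + 2 := by omega
    rw [this, Nat.fib_add_two, Nat.mul_add]
    ring
  rw [h1, Finset.sum_congr rfl h2, Finset.sum_add_distrib]
  have h3 : (∑ k ∈ Finset.range (n + 2), Nat.fib (k + 1) * Nat.fib (n + 1 - k)) = S n := by
    rw [Finset.sum_range_succ]
    simp only [Nat.sub_self, Nat.fib_zero, Nat.mul_zero, Nat.add_zero]
    rw [S]
    apply Finset.sum_congr rfl
    intro k hk
    rw [Finset.mem_range] at hk
    have : n + 1 - k = n - k + 1 := by omega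
    rw [this]
  rw [h3]
  rfl

/-- self-convolution of the Fibonacci numbers (`F_i = fib (i+1)`):
`5·∑_{k=0}^{n} F_k·F_{n−k} = (3n+5)·F_n + (n+1)·F_{n−1}`. -/
theorem fib_self_convolution (n : ℕ) :
    5 * ∑ k ∈ Finset.range (n + 1), Nat.fib (k + 1) * Nat.fib (n - k + 1) =
      (3 * n + 5) * Nat.fib (n + 1) + (n + 1) * Nat.fib n := by
  suffices h : ∀ m, 5 * S m = (3 * m + 5) * Nat.fib (m + 1) + (m + 1) * Nat.fib m from h n
  intro m
  induction m using Nat.twoStepInduction with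
  | zero => rfl
  | one => rfl
  | more m ih1 ih2 =>
    rw [S_rec, Nat.mul_add, Nat.mul_add, ih1, ih2]
    have e3 : Nat.fib (m + 3) = Nat.fib (m + 1) + Nat.fib (m + 2) := Nat.fib_add_two
    have e2 : Nat.fib (m + 2) = Nat.fib m + Nat.fib (m + 1) := Nat.fib_add_two
    rw [show m + 2 + 1 = m + 3 from rfl, e3, e2]
    ring
end

section
/- Let R = 𝓡(d_R(t), h_R(t)) and S = 𝓡(d_S(t), h_S(t)) be Riordan arrays over a commutative ring, and suppose A_R(t) and A_S(t) are power series satisfying the A-sequence relations h_R(t) = t·A_R(h_R(t)) and h_S(t) = t·A_S(h_S(t)). Let d_{n,k} denote the (n,k)-entry of the matrix sum R + S, i.e., d_{n,k} = [t^n](d_R·h_R^k) + [t^n](d_S·h_S^k). Then for all n, k ≥ 0: d_{n+2,k+2} = ∑_{j=k}^{n+1} d_{n+1,j+1}·((A_R)_{j−k} + (A_S)_{j−k}) − ∑_{j=k}^{n+1} d_{n,j}·(∑_{p+q=j−k} (A_R)_p·(A_S)_q), where (A)_m denotes the coefficient of t^m in A(t). -/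
open PowerSeries Finset

private lemma sum_Icc_shift {M} [AddCommMonoid M] (k n : ℕ) (f : ℕ → M) :
    ∑ j ∈ Icc k (k+n), f j = ∑ i ∈ range (n+1), f (k+i) := by
  refine Finset.sum_nbij' (fun j => j - k) (fun i => k + i) ?_ ?_ ?_ ?_ ?_ <;>
    intros <;> simp_all <;> omega

private lemma aux_vanish {R : Type*} [CommRing R] (f h : R⟦X⟧)
    (h0 : constantCoeff h = 0) {n j : ℕ} (hnj : n < j) :
    coeff n (f * h ^ j) = 0 := by
  have hdvd : (X : R⟦X⟧) ^ j ∣ f * h ^ j :=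
    Dvd.dvd.mul_left (pow_dvd_pow_of_dvd (PowerSeries.X_dvd_iff.mpr h0) j) f
  exact PowerSeries.X_pow_dvd_iff.mp hdvd n hnj

private lemma riordan_rec {R : Type*} [CommRing R] (f h A : R⟦X⟧)
    (h0 : constantCoeff h = 0) (hA : h = X * A.compose h) (n k : ℕ) :
    coeff (n+1) (f * h^(k+1)) = ∑ j ∈ Icc k n, coeff n (f * h^j) * coeff (j-k) A := by
  have step1 : f * h^(k+1) = X * (f * h^k * A.compose h) := by
    nth_rewrite 1 [pow_succ]
    nth_rewrite 2 [hA]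
    ring
  rw [step1, coeff_succ_X_mul, coeff_mul]
  have hcoeff : ∀ b : ℕ, b ≤ n → coeff b (A.compose h)
      = ∑ i ∈ range (n+1), coeff i A * coeff b (h ^ i) := by
    intro b hb
    simp only [PowerSeries.compose, coeff_mk]
    refine Finset.sum_subset (Finset.range_subset_range.mpr (by omega)) ?_
    intro i hi hib
    simp only [Finset.mem_range] at hi hib
    have : coeff b (h ^ i) = 0 := by
      have := aux_vanish (1 : R⟦X⟧) h h0 (n := b) (j := i) (by omega)
      simpa using this
    simp [this]
  calc ∑ p ∈ antidiagonal n, coeff p.1 (f * h^k) * coeff p.2 (A.compose h)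
      = ∑ p ∈ antidiagonal n, ∑ i ∈ range (n+1),
          coeff i A * (coeff p.1 (f * h^k) * coeff p.2 (h ^ i)) := by
        refine Finset.sum_congr rfl fun p hp => ?_
        rw [hcoeff p.2 (by
          simp only [Finset.HasAntidiagonal.mem_antidiagonal] at hp; omega), Finset.mul_sum]
        exact Finset.sum_congr rfl fun i _ => by ring
    _ = ∑ i ∈ range (n+1), coeff i A * coeff n (f * h^(k+i)) := by
        rw [Finset.sum_comm]
        refine Finset.sum_congr rfl fun i _ => ?_
        rw [← Finset.mul_sum, ← coeff_mul]
        rw [show f * h^k * h^i = f * h^(k+i) by rw [pow_add]; ring]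
    _ = ∑ j ∈ Icc k (k+n), coeff n (f * h^j) * coeff (j-k) A := by
        rw [sum_Icc_shift]
        refine Finset.sum_congr rfl fun i _ => ?_
        rw [show k + i - k = i by omega]; ring
    _ = ∑ j ∈ Icc k n, coeff n (f * h^j) * coeff (j-k) A := by
        refine (Finset.sum_subset (Finset.Icc_subset_Icc_right (by omega)) ?_).symm
        intro j hj hjn
        simp only [Finset.mem_Icc] at hj hjn
        rw [aux_vanish f h h0 (by omega), zero_mul]

private lemma riordan_rec' {R : Type*} [CommRing R] (f h A : R⟦X⟧)
    (h0 : constantCoeff h = 0) (hA : h = X * A.compose h) (n k : ℕ) :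
    coeff (n+2) (f * h^(k+2)) =
      ∑ j ∈ Icc k (n+1), coeff (n+1) (f * h^(j+1)) * coeff (j-k) A := by
  rw [riordan_rec f h A h0 hA (n+1) (k+1)]
  have e1 : ∑ j ∈ Icc (k+1) (n+1), coeff (n+1) (f * h^j) * coeff (j-(k+1)) A
      = ∑ j ∈ Icc k n, coeff (n+1) (f * h^(j+1)) * coeff (j-k) A := by
    refine (Finset.sum_nbij' (fun j => j - 1) (fun j => j + 1) ?_ ?_ ?_ ?_ ?_).symm.symm <;>
      intro a ha <;> simp only [Finset.mem_Icc] at * <;> try omega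
    have : a - 1 + 1 = a := by omega
    rw [show a - (k+1) = a - 1 - k by omega, this]
  rw [e1]
  refine Finset.sum_subset (Finset.Icc_subset_Icc_right (by omega)) ?_
  intro j hj hjn
  simp only [Finset.mem_Icc] at hj hjn
  have hj' : j = n + 1 := by omega
  rw [hj', aux_vanish f h h0 (by omega), zero_mul]

private lemma conv_sum {R : Type*} [CommRing R] (A B : R⟦X⟧) (k i : ℕ) (hk : k ≤ i) :
    ∑ j ∈ Icc k i, coeff (i-j) A * coeff (j-k) B
      = ∑ pq ∈ antidiagonal (i-k), coeff pq.1 A * coeff pq.2 B := by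
  obtain ⟨m, rfl⟩ : ∃ m, i = k + m := ⟨i - k, by omega⟩
  rw [show k + m - k = m by omega,
    Finset.Nat.sum_antidiagonal_eq_sum_range_succ (fun p q => coeff p A * coeff q B) m,
    sum_Icc_shift]
  calc ∑ j ∈ range (m+1), coeff (k+m-(k+j)) A * coeff (k+j-k) B
      = ∑ j ∈ range (m+1), coeff (m-j) A * coeff j B := by
        refine Finset.sum_congr rfl fun j _ => ?_
        rw [show k+m-(k+j) = m-j by omega, show k+j-k = j by omega]
    _ = ∑ p ∈ range (m+1), coeff p A * coeff (m-p) B := by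
        rw [← Finset.sum_range_reflect (fun p => coeff p A * coeff (m-p) B) (m+1)]
        refine Finset.sum_congr rfl fun j hj => ?_
        simp only [Finset.mem_range] at hj
        rw [show m+1-1-j = m-j by omega, show m-(m-j) = j by omega]
    _ = ∑ p ∈ range (Nat.succ m), coeff p A * coeff (m-p) B := rfl

private lemma riordan_cross {R : Type*} [CommRing R] (f h A B : R⟦X⟧)
    (h0 : constantCoeff h = 0) (hA : h = X * A.compose h) (n k : ℕ) :
    ∑ j ∈ Icc k (n+1), coeff (n+1) (f * h^(j+1)) * coeff (j-k) B
      = ∑ j ∈ Icc k (n+1), coeff n (f * h^j) *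
          ∑ pq ∈ antidiagonal (j-k), coeff pq.1 A * coeff pq.2 B := by
  have lhs_drop : ∑ j ∈ Icc k (n+1), coeff (n+1) (f * h^(j+1)) * coeff (j-k) B
      = ∑ j ∈ Icc k n, coeff (n+1) (f * h^(j+1)) * coeff (j-k) B := by
    refine (Finset.sum_subset (Finset.Icc_subset_Icc_right (by omega)) ?_).symm
    intro j hj hjn
    simp only [Finset.mem_Icc] at hj hjn
    have hj' : j = n + 1 := by omega
    rw [hj', aux_vanish f h h0 (by omega), zero_mul]
  have rhs_drop : ∑ j ∈ Icc k (n+1), coeff n (f * h^j) *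
        ∑ pq ∈ antidiagonal (j-k), coeff pq.1 A * coeff pq.2 B
      = ∑ j ∈ Icc k n, coeff n (f * h^j) *
        ∑ pq ∈ antidiagonal (j-k), coeff pq.1 A * coeff pq.2 B := by
    refine (Finset.sum_subset (Finset.Icc_subset_Icc_right (by omega)) ?_).symm
    intro j hj hjn
    simp only [Finset.mem_Icc] at hj hjn
    rw [aux_vanish f h h0 (by omega), zero_mul]
  rw [lhs_drop, rhs_drop]
  calc ∑ j ∈ Icc k n, coeff (n+1) (f * h^(j+1)) * coeff (j-k) B
      = ∑ j ∈ Icc k n, ∑ i ∈ Icc j n,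
          coeff n (f * h^i) * (coeff (i-j) A * coeff (j-k) B) := by
        refine Finset.sum_congr rfl fun j _ => ?_
        rw [riordan_rec f h A h0 hA n j, Finset.sum_mul]
        exact Finset.sum_congr rfl fun i _ => by ring
    _ = ∑ i ∈ Icc k n, ∑ j ∈ Icc k i,
          coeff n (f * h^i) * (coeff (i-j) A * coeff (j-k) B) := by
        refine Finset.sum_comm' ?_
        intro x y; simp only [mem_Icc]; omega
    _ = ∑ i ∈ Icc k n, coeff n (f * h^i) *
          ∑ pq ∈ antidiagonal (i-k), coeff pq.1 A * coeff pq.2 B := by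
        refine Finset.sum_congr rfl fun i hi => ?_
        simp only [Finset.mem_Icc] at hi
        rw [← Finset.mul_sum]
        congr 1
        exact conv_sum A B k i hi.1

private lemma conv_swap {R : Type*} [CommRing R] (A B : R⟦X⟧) (m : ℕ) :
    ∑ pq ∈ antidiagonal m, coeff pq.1 A * coeff pq.2 B
      = ∑ pq ∈ antidiagonal m, coeff pq.1 B * coeff pq.2 A := by
  conv_lhs => rw [← Finset.HasAntidiagonal.map_swap_antidiagonal (n := m)]
  rw [Finset.sum_map]
  exact Finset.sum_congr rfl fun p _ => by simp [mul_comm]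

/-- the second-order recurrence for Riordan sumrays.  If `R = 𝓡(dR, hR)`
and `S = 𝓡(dS, hS)` are Riordan arrays with A-sequences `AR`, `AS`
(so `hR = t·AR(hR)` and `hS = t·AS(hS)`), and `d n k` denotes the `(n,k)`-entry of the
entrywise sum `R + S`, then
`d_{n+2,k+2} = ∑_{j=k}^{n+1} d_{n+1,j+1}·((AR)_{j−k}+(AS)_{j−k})
             − ∑_{j=k}^{n+1} d_{n,j}·∑_{p+q=j−k}(AR)_p·(AS)_q`. -/
theorem riordan_sumray_recurrence {R : Type*} [CommRing R]
    (dR hR dS hS AR AS : R⟦X⟧)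
    (hdR : constantCoeff dR ≠ 0) (hhR0 : constantCoeff hR = 0)
    (hhR1 : coeff 1 hR ≠ 0)
    (hdS : constantCoeff dS ≠ 0) (hhS0 : constantCoeff hS = 0)
    (hhS1 : coeff 1 hS ≠ 0)
    (hAR0 : constantCoeff AR ≠ 0) (hAS0 : constantCoeff AS ≠ 0)
    (hAR : hR = X * AR.compose hR) (hAS : hS = X * AS.compose hS)
    (d : ℕ → ℕ → R)
    (hd : ∀ n k : ℕ, d n k = coeff n (dR * hR ^ k) + coeff n (dS * hS ^ k)) :
    ∀ n k : ℕ,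
      d (n + 2) (k + 2) =
        (∑ j ∈ Finset.Icc k (n + 1),
            d (n + 1) (j + 1) * (coeff (j - k) AR + coeff (j - k) AS)) -
        (∑ j ∈ Finset.Icc k (n + 1),
            d n j * ∑ pq ∈ Finset.HasAntidiagonal.antidiagonal (j - k),
              coeff pq.1 AR * coeff pq.2 AS) := by
  intro n k
  have hr2 := riordan_rec' dR hR AR hhR0 hAR n k
  have hs2 := riordan_rec' dS hS AS hhS0 hAS n k
  have hrc := riordan_cross dR hR AR AS hhR0 hAR n k
  have hsc : ∑ j ∈ Icc k (n+1), coeff (n+1) (dS * hS^(j+1)) * coeff (j-k) AR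
      = ∑ j ∈ Icc k (n+1), coeff n (dS * hS^j) *
          ∑ pq ∈ antidiagonal (j-k), coeff pq.1 AR * coeff pq.2 AS := by
    rw [riordan_cross dS hS AS AR hhS0 hAS n k]
    exact Finset.sum_congr rfl fun j _ => by rw [conv_swap AS AR]
  simp only [hd]
  rw [hr2, hs2]
  simp only [add_mul, mul_add, Finset.sum_add_distrib]
  rw [← hrc, ← hsc]
  abel
end

section
/- Define the operation Der on pairs of formal power series over a commutative ring by Der(d, h) = (h', t·d), where h' is the formal derivative. Then for every power series d(t) = ∑_i d_i t^i and every m ≥ 0, the 2m-fold iterate satisfies Der^{2m}(d(t), t) = (∑_{i≥0} d_i·(i+1)^m·t^i, t). That is, iterating Der an even number 2m of times on the Appell-subgroup Riordan array 𝓡(d(t), t) yields the Riordan array 𝓡(∑_{i≥0} d_i (i+1)^m t^i, t). -/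
open PowerSeries

/-- The operation `Der` on pairs of formal power series:
`Der(d, h) = (h', t·d)`. -/
noncomputable def riordanDer {R : Type*} [CommRing R] (p : R⟦X⟧ × R⟦X⟧) : R⟦X⟧ × R⟦X⟧ :=
  (p.2.derivativeFun, X * p.1)

lemma riordanDer_two {R : Type*} [CommRing R] (d : R⟦X⟧) :
    riordanDer^[2] (d, (X : R⟦X⟧)) =
      (PowerSeries.mk (fun i => coeff i d * ((i + 1 : ℕ) : R)), (X : R⟦X⟧)) := by
  show riordanDer (riordanDer (d, X)) = _
  have hX : (X : R⟦X⟧).derivativeFun = 1 := by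
    ext n
    erw [coeff_derivativeFun]
    cases n <;> simp [coeff_X]
  simp only [riordanDer, hX, mul_one]
  refine Prod.ext ?_ rfl
  ext n
  erw [coeff_derivativeFun]
  dsimp only
  rw [coeff_mk, coeff_succ_X_mul]
  push_cast
  ring

/-- even iterates of `Der` on the Appell-subgroup array `𝓡(d(t), t)`:
`Der^{2m}(𝓡(d, t)) = 𝓡(∑_i d_i (i+1)^m t^i, t)`. -/
theorem der_even_iterate_appell {R : Type*} [CommRing R] (d : R⟦X⟧) (m : ℕ) :
    riordanDer^[2 * m] (d, (X : R⟦X⟧)) =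
      (PowerSeries.mk (fun i => coeff i d * ((i + 1 : ℕ) : R) ^ m), (X : R⟦X⟧)) := by
  induction m generalizing d with
  | zero =>
    simp only [Nat.mul_zero, Function.iterate_zero, id_eq, pow_zero, mul_one]
    refine Prod.ext ?_ rfl
    ext n
    simp
  | succ m ih =>
    rw [Nat.mul_succ, Nat.add_comm, Function.iterate_add_apply, ih, riordanDer_two]
    refine Prod.ext ?_ rfl
    ext n
    simp only [coeff_mk]
    ring
end

section
/- For every n ≥ 3: ∑_{i=3}^{n} (C_i − C_{i−1} − C_{i−2})·F_{n−i} = C_n − F_n, where C_i is the i-th Catalan number and F_m = fib(m+1) (Fibonacci with convention F_0 = F_1 = 1). Equivalently: ∑_{i=3}^{n} (catalan(i) − catalan(i−1) − catalan(i−2))·fib(n−i+1) = catalan(n) − fib(n+1). (Combinatorially: both sides count Dyck paths of semilength n containing at least one ascent-descent block other than UD or UUDD.) -/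
private lemma catalan_four : catalan 4 = 14 := by
  rw [show (4:ℕ) = 3 + 1 from rfl, catalan_succ, Fin.sum_univ_succ, Fin.sum_univ_succ,
    Fin.sum_univ_succ, Fin.sum_univ_succ, Fin.sum_univ_zero]
  norm_num [catalan_two, catalan_three, catalan_one, catalan_zero]

private lemma A_step (m : ℕ) (hm : 3 ≤ m) :
    ∑ i ∈ Finset.Icc 3 (m+2),
        ((catalan i : ℤ) - catalan (i - 1) - catalan (i - 2)) * Nat.fib (m + 2 - i + 1) =
      (∑ i ∈ Finset.Icc 3 (m+1),
        ((catalan i : ℤ) - catalan (i - 1) - catalan (i - 2)) * Nat.fib (m + 1 - i + 1))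
      + (∑ i ∈ Finset.Icc 3 m,
        ((catalan i : ℤ) - catalan (i - 1) - catalan (i - 2)) * Nat.fib (m - i + 1))
      + ((catalan (m+2) : ℤ) - catalan (m+1) - catalan m) := by
  rw [Finset.sum_Icc_succ_top (by omega : 3 ≤ m + 2),
      Finset.sum_Icc_succ_top (by omega : 3 ≤ m + 1),
      Finset.sum_Icc_succ_top (by omega : 3 ≤ m + 1)]
  have key : ∑ i ∈ Finset.Icc 3 m,
      ((catalan i : ℤ) - catalan (i - 1) - catalan (i - 2)) * Nat.fib (m + 2 - i + 1) =
      ∑ i ∈ Finset.Icc 3 m,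
      (((catalan i : ℤ) - catalan (i - 1) - catalan (i - 2)) * Nat.fib (m + 1 - i + 1)
       + ((catalan i : ℤ) - catalan (i - 1) - catalan (i - 2)) * Nat.fib (m - i + 1)) := by
    apply Finset.sum_congr rfl
    intro i hi
    simp only [Finset.mem_Icc] at hi
    obtain ⟨k, hk⟩ : ∃ k, m = i + k := ⟨m - i, by omega⟩
    subst hk
    have h1 : i + k + 2 - i + 1 = k + 3 := by omega
    have h2 : i + k + 1 - i + 1 = k + 2 := by omega
    have h3 : i + k - i + 1 = k + 1 := by omega
    rw [h1, h2, h3, show k + 3 = (k+1) + 2 from rfl, Nat.fib_add_two]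
    push_cast
    ring
  rw [key, Finset.sum_add_distrib]
  have e1 : m + 2 - (m + 2) + 1 = 1 := by omega
  have e2 : m + 2 - (m + 1) + 1 = 2 := by omega
  have e3 : m + 1 - (m + 1) + 1 = 1 := by omega
  have e4 : m + 2 - 1 = m + 1 := by omega
  have e5 : m + 2 - 2 = m := by omega
  have e6 : m + 1 - 1 = m := by omega
  have e7 : m + 1 - 2 = m - 1 := by omega
  rw [e1, e2, e3, e4, e5, e6, e7]
  norm_num [Nat.fib_one, Nat.fib_two]
  ring

/-- for `n ≥ 3`,
`∑_{i=3}^{n} (C_i − C_{i−1} − C_{i−2})·F_{n−i} = C_n − F_n`,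
where `C_i = catalan i` and `F_m = fib (m+1)`. -/
theorem catalan_fib_dyck_identity (n : ℕ) (hn : 3 ≤ n) :
    ∑ i ∈ Finset.Icc 3 n,
        ((catalan i : ℤ) - catalan (i - 1) - catalan (i - 2)) * Nat.fib (n - i + 1) =
      (catalan n : ℤ) - Nat.fib (n + 1) := by
  induction n using Nat.strong_induction_on with
  | _ n ih =>
    match n, hn with
    | 3, _ =>
      rw [show Finset.Icc 3 3 = {3} from rfl, Finset.sum_singleton]
      norm_num [catalan_two, catalan_three, catalan_one]
    | 4, _ =>
      rw [Finset.sum_Icc_succ_top (by omega : 3 ≤ 4),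
        show Finset.Icc 3 3 = {3} from rfl, Finset.sum_singleton]
      norm_num [catalan_two, catalan_three, catalan_one, catalan_four]
    | (m+5), _ =>
      have h1 := ih (m+4) (by omega) (by omega)
      have h2 := ih (m+3) (by omega) (by omega)
      have hs := A_step (m+3) (by omega)
      rw [show m + 5 = (m+3) + 2 from rfl, hs, show (m:ℕ)+3+1 = m+4 from rfl, h1, h2]
      have f1 : (Nat.fib (m+6) : ℤ) = Nat.fib (m+4) + Nat.fib (m+5) := by
        rw [show m+6 = (m+4)+2 from rfl, Nat.fib_add_two]; push_cast; ring
      have f2 : (Nat.fib (m+5) : ℤ) = Nat.fib (m+3) + Nat.fib (m+4) := by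
        rw [show m+5 = (m+3)+2 from rfl, Nat.fib_add_two]; push_cast; ring
      ring_nf
      ring_nf at f1 f2
      linarith [f1, f2]
end

section
/- Let C(t) = ∑_{n≥0} catalan(n)·t^n be the generating function of the Catalan numbers (over ℚ or ℤ). Then for all natural numbers n ≥ k ≥ 0, the (n,k)-entry of Der(Cat) = 𝓡((t·C(t))', t·C(t)) satisfies: the coefficient of t^{n−k} in (d/dt)(t·C(t)) · C(t)^k equals binomial(2n−k, n−k). -/
open PowerSeries

private noncomputable def Cgf : PowerSeries ℚ := PowerSeries.mk fun i => (catalan i : ℚ)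

private lemma Cgf_eq : Cgf = 1 + X * Cgf ^ 2 := by
  ext n
  cases n with
  | zero => simp [Cgf, coeff_zero_eq_constantCoeff]
  | succ m =>
    rw [map_add, coeff_succ_X_mul, sq, coeff_mul]
    simp only [Cgf, coeff_mk, coeff_one, Nat.succ_ne_zero, if_false, zero_add]
    rw [catalan_succ']
    push_cast
    rfl

private lemma main (m : ℕ) : ∀ k : ℕ,
    coeff m ((X * Cgf).derivativeFun * Cgf ^ k) = ((2 * m + k).choose m : ℚ) := by
  induction m using Nat.strong_induction_on with
  | _ m ih =>
    intro k
    induction k with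
    | zero =>
      rw [pow_zero, mul_one, show PowerSeries.derivativeFun (X * Cgf : ℚ⟦X⟧) = derivative ℚ (X * Cgf : ℚ⟦X⟧) from rfl, coeff_derivative, coeff_succ_X_mul]
      simp only [Cgf, coeff_mk]
      have h := succ_mul_catalan_eq_centralBinom m
      have : ((m + 1) * catalan m : ℚ) = (m.centralBinom : ℚ) := by exact_mod_cast congrArg (fun x : ℕ => (x : ℚ)) h
      rw [Nat.centralBinom] at this
      rw [add_zero]
      linarith [this]
    | succ k ihk =>
      have key : (X * Cgf).derivativeFun * Cgf ^ (k + 1)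
          = (X * Cgf).derivativeFun * Cgf ^ k
            + X * ((X * Cgf).derivativeFun * Cgf ^ (k + 2)) := by
        calc (X * Cgf).derivativeFun * Cgf ^ (k + 1)
            = (X * Cgf).derivativeFun * Cgf ^ k * Cgf := by ring
          _ = (X * Cgf).derivativeFun * Cgf ^ k * (1 + X * Cgf ^ 2) := by rw [← Cgf_eq]
          _ = (X * Cgf).derivativeFun * Cgf ^ k
              + X * ((X * Cgf).derivativeFun * Cgf ^ (k + 2)) := by ring
      rw [key, map_add]
      cases m with
      | zero =>
        rw [ihk]
        simp
      | succ p =>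
        rw [ihk, coeff_succ_X_mul, ih p (Nat.lt_succ_self p) (k + 2)]
        have h1 : 2 * (p + 1) + (k + 1) = (2 * p + (k + 2)) + 1 := by ring
        have h2 : 2 * p + (k + 2) + 1 = (2 * p + (k + 2)) + 1 := rfl
        rw [h1, Nat.choose_succ_succ (2 * p + (k + 2)) p]
        push_cast
        have h3 : 2 * (p + 1) + k = 2 * p + (k + 2) := by ring
        rw [h3]
        ring

/-- the `(n,k)`-entry of `Der(Cat) = 𝓡((t·C(t))', t·C(t))`, where
`C(t)` is the Catalan generating function, is `binomial(2n−k, n−k)`: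
`[t^{n−k}]((t·C)'·C^k) = C(2n−k, n−k)` for `n ≥ k`. -/
theorem der_catalan_entries (n k : ℕ) (hkn : k ≤ n) :
    coeff (n - k)
        ((X * PowerSeries.mk fun i => (catalan i : ℚ)).derivativeFun *
          (PowerSeries.mk fun i => (catalan i : ℚ)) ^ k) =
      ((2 * n - k).choose (n - k) : ℚ) := by
  have h := main (n - k) k
  have h2 : 2 * (n - k) + k = 2 * n - k := by omega
  rw [h2] at h
  exact h
end

section
/- Let C(t) = ∑_{n≥0} catalan(n)·t^n be the generating function of the Catalan numbers (over ℚ or ℤ). Then for all natural numbers n ≥ k ≥ 0, the (n,k)-entry of Der(Sha) = 𝓡(C'(t), t·C(t)) satisfies: the coefficient of t^{n−k} in C'(t)·C(t)^k equals binomial(2n−k+2, n−k). -/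
open PowerSeries Finset

private noncomputable def Cat : ℚ⟦X⟧ := PowerSeries.mk fun i => (catalan i : ℚ)

private lemma cat_eq : Cat = 1 + X * Cat ^ 2 := by
  ext m
  cases m with
  | zero => simp [Cat]
  | succ m =>
    rw [map_add, coeff_succ_X_mul]
    simp only [Cat, coeff_mk, coeff_one, Nat.succ_ne_zero, if_false, zero_add, sq, coeff_mul,
      coeff_mk]
    rw [catalan_succ' m]
    push_cast
    rfl

private lemma cat_pow_rec (j : ℕ) : Cat ^ (j + 2) = Cat ^ (j + 1) + X * Cat ^ (j + 3) := by
  calc Cat ^ (j + 2) = Cat ^ (j + 1) * (1 + X * Cat ^ 2) := by rw [← cat_eq]; ring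
  _ = Cat ^ (j + 1) + X * Cat ^ (j + 3) := by ring

private lemma cat_coeff_pow : ∀ m j : ℕ,
    coeff (R := ℚ) m (Cat ^ (j + 1)) = (j + 1 : ℚ) / (m + j + 1) * ((2 * m + j).choose m : ℚ) := by
  intro m
  induction m with
  | zero =>
    intro j
    have : coeff (R := ℚ) 0 (Cat ^ (j + 1)) = (constantCoeff (R := ℚ) (Cat)) ^ (j + 1) := by
      rw [← map_pow]; simp [coeff_zero_eq_constantCoeff]
    have hc : constantCoeff (R := ℚ) Cat = 1 := by simp [Cat, ← coeff_zero_eq_constantCoeff]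
    rw [this, hc, one_pow]
    simp
    rw [div_self]
    positivity
  | succ m ihm =>
    intro j
    induction j with
    | zero =>
      rw [pow_one]
      simp only [Cat, coeff_mk]
      have h := succ_mul_catalan_eq_centralBinom (m + 1)
      have h2 : (m + 1).centralBinom = (2 * (m + 1)).choose (m + 1) := rfl
      rw [h2] at h
      have : ((m + 1 + 1 : ℕ) : ℚ) * catalan (m + 1) = ((2 * (m + 1)).choose (m + 1) : ℚ) := by
        exact_mod_cast congrArg (Nat.cast : ℕ → ℚ) h
      push_cast at this ⊢
      rw [div_mul_eq_mul_div, eq_div_iff (by positivity)]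
      push_cast
      simp only [Nat.add_zero]
      norm_num
      linarith [this]

    | succ j ihj =>
      have hrec := congrArg (coeff (R := ℚ) (m + 1)) (cat_pow_rec j)
      rw [map_add, coeff_succ_X_mul] at hrec
      -- Cat ^ (j+2) = Cat ^ ((j+1)+1), Cat ^ (j+3) = Cat ^ ((j+2)+1)
      have e1 : coeff (R := ℚ) (m + 1) (Cat ^ (j + 1 + 1)) =
          coeff (R := ℚ) (m + 1) (Cat ^ (j + 1)) + coeff (R := ℚ) m (Cat ^ (j + 2 + 1)) := by
        convert hrec using 3 <;> ring
      rw [e1, ihj, ihm (j + 2)]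
      -- now a rational identity in binomials
      have hpascal : ((2 * (m + 1) + (j + 1)).choose (m + 1) : ℚ)
          = ((2 * m + (j + 2)).choose m : ℚ) + ((2 * m + (j + 2)).choose (m + 1) : ℚ) := by
        have : (2 * (m + 1) + (j + 1)) = (2 * m + (j + 2)) + 1 := by ring
        rw [this, Nat.choose_succ_succ' (2 * m + (j + 2)) m]
        push_cast; ring
      have hratio : ((2 * m + (j + 2)).choose (m + 1) : ℚ) * (m + 1)
          = ((2 * m + (j + 2)).choose m : ℚ) * (m + j + 2) := by
        have h := Nat.choose_succ_right_eq (2 * m + (j + 2)) m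
        have hs : 2 * m + (j + 2) - m = m + j + 2 := by omega
        rw [hs] at h
        exact_mod_cast congrArg (Nat.cast : ℕ → ℚ) h
      have he1 : (2 * (m + 1) + j : ℕ) = 2 * m + (j + 2) := by ring
      rw [he1] at *
      set a : ℚ := ((2 * m + (j + 2)).choose m : ℚ)
      set c : ℚ := ((2 * m + (j + 2)).choose (m + 1) : ℚ)
      have hm1 : ((m:ℚ) + 1 + j + 1) ≠ 0 := by positivity
      have hm2 : ((m:ℚ) + 1 + (j + 1) + 1) ≠ 0 := by positivity
      have hm3 : ((m:ℚ) + (j + 2) + 1) ≠ 0 := by positivity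
      push_cast at hpascal ⊢
      rw [hpascal]
      field_simp
      nlinarith [hratio, sq_nonneg ((m:ℚ)+j)]

/-- the `(n,k)`-entry of `Der(Sha) = 𝓡(C'(t), t·C(t))`, where
`C(t)` is the Catalan generating function, is `binomial(2n−k+2, n−k)`:
`[t^{n−k}](C'·C^k) = C(2n−k+2, n−k)` for `n ≥ k`. -/
theorem der_shapiro_entries (n k : ℕ) (hkn : k ≤ n) :
    coeff (R := ℚ) (n - k)
        ((PowerSeries.mk fun i => (catalan i : ℚ)).derivativeFun *
          (PowerSeries.mk fun i => (catalan i : ℚ)) ^ k) =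
      ((2 * n - k + 2).choose (n - k) : ℚ) := by
  have hCat : (PowerSeries.mk fun i => ((catalan i : ℚ))) = Cat := rfl
  rw [hCat]
  set m := n - k with hm
  have h2 : 2 * n - k + 2 = 2 * m + k + 2 := by omega
  rw [h2]
  -- derivative of power
  have hdpow : ∀ j : ℕ, (Cat ^ (j + 1)).derivativeFun
      = ((j : ℚ) + 1) • (Cat.derivativeFun * Cat ^ j) := by
    intro j
    induction j with
    | zero => simp
    | succ j ih =>
      rw [pow_succ, derivativeFun_mul, ih]
      rw [smul_eq_C_mul, smul_eq_C_mul]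
      have : (Cat ^ (j+1)) • Cat.derivativeFun = Cat ^ (j + 1) * Cat.derivativeFun := rfl
      rw [this]
      have : Cat • (PowerSeries.C (R := ℚ) ((j:ℚ)+1) * (Cat.derivativeFun * Cat ^ j))
          = Cat * (PowerSeries.C (R := ℚ) ((j:ℚ)+1) * (Cat.derivativeFun * Cat ^ j)) := rfl
      rw [this]
      push_cast
      have hC : (PowerSeries.C (R := ℚ) ((j:ℚ) + 1 + 1)) = PowerSeries.C (R := ℚ) ((j:ℚ)+1) + 1 := by
        rw [map_add, map_one]
      rw [hC]
      ring
  have key := congrArg (coeff (R := ℚ) m) (hdpow k)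
  rw [show (Cat ^ (k + 1)).derivativeFun = d⁄dX ℚ (Cat ^ (k + 1)) from rfl,
    coeff_derivativeFun, map_smul, cat_coeff_pow (m+1) k, smul_eq_mul] at key
  have hne : ((k:ℚ) + 1) ≠ 0 := by positivity
  have targ : coeff (R := ℚ) m (Cat.derivativeFun * Cat ^ k)
      = ((k:ℚ)+1)/((m:ℚ)+(k:ℚ)+2) * ((2*(m+1)+k).choose (m+1) : ℚ) * ((m:ℚ)+1) / ((k:ℚ)+1) := by
    field_simp at key ⊢
    push_cast at key ⊢
    linarith [key]
  rw [targ]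
  have hratio : ((2*(m+1)+k).choose (m+1) : ℚ) * (m + 1)
      = ((2*(m+1)+k).choose m : ℚ) * (m + k + 2) := by
    have h := Nat.choose_succ_right_eq (2*(m+1)+k) m
    have hs : 2*(m+1)+k - m = m + k + 2 := by omega
    rw [hs] at h
    exact_mod_cast congrArg (Nat.cast : ℕ → ℚ) h
  have he : (2 * (m+1) + k : ℕ) = 2 * m + k + 2 := by ring
  rw [he] at hratio ⊢
  have h0 : ((m:ℚ)+(k:ℚ)+2) ≠ 0 := by positivity
  field_simp
  linear_combination hratio
end

section
/- For all natural numbers n ≥ k ≥ 0: the sum, over all (k+1)-tuples (i_0, i_1, …, i_k) of natural numbers with i_0 + i_1 + ⋯ + i_k = n − k, of binomial(2·i_0, i_0)·catalan(i_1)·catalan(i_2)···catalan(i_k), equals binomial(2n−k, n). -/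
open Finset PowerSeries

/-- Ballot-type numbers. -/
def bb (k m : ℕ) : ℕ := (2 * m + k).choose (m + k)

lemma coeff_mk_mul (f g : ℕ → ℕ) (m : ℕ) :
    (PowerSeries.coeff m) (PowerSeries.mk f * PowerSeries.mk g) =
      ∑ p ∈ Finset.HasAntidiagonal.antidiagonal m, f p.1 * g p.2 := by
  simp [PowerSeries.coeff_mul]

lemma bb_pascal (k m : ℕ) : bb (k + 1) (m + 1) = bb k (m + 1) + bb (k + 2) m := by
  unfold bb
  rw [show 2 * (m + 1) + (k + 1) = (2 * m + k + 2) + 1 by ring,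
    show (m + 1) + (k + 1) = (m + k + 1) + 1 by ring, Nat.choose_succ_succ]
  congr 2 <;> omega

lemma catalan_sq :
    (PowerSeries.mk catalan : PowerSeries ℕ) * PowerSeries.mk catalan =
      PowerSeries.mk fun n => catalan (n + 1) := by
  ext m
  rw [coeff_mk_mul, PowerSeries.coeff_mk, catalan_succ']

lemma L : ∀ m k : ℕ,
    (PowerSeries.coeff m) ((PowerSeries.mk catalan : PowerSeries ℕ) * PowerSeries.mk (bb k)) =
      bb (k + 1) m := by
  intro m
  induction m using Nat.strong_induction_on with
  | _ m ih =>
    intro k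
    match m with
    | 0 => simp [coeff_mk_mul, bb]
    | m + 1 =>
      rw [coeff_mk_mul, Finset.Nat.sum_antidiagonal_succ]
      have key : ∑ p ∈ Finset.HasAntidiagonal.antidiagonal m, catalan (p.1 + 1) * bb k p.2
          = bb (k + 2) m := by
        have h1 : ∑ p ∈ Finset.HasAntidiagonal.antidiagonal m, catalan (p.1 + 1) * bb k p.2
            = (PowerSeries.coeff m)
              ((PowerSeries.mk (fun n => catalan (n + 1)) : PowerSeries ℕ) *
                PowerSeries.mk (bb k)) := by
          rw [coeff_mk_mul]
        rw [h1, ← catalan_sq, mul_assoc, PowerSeries.coeff_mul]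
        have h2 : ∀ p ∈ Finset.HasAntidiagonal.antidiagonal m,
            (PowerSeries.coeff p.1) (PowerSeries.mk catalan : PowerSeries ℕ) *
              (PowerSeries.coeff p.2)
                ((PowerSeries.mk catalan : PowerSeries ℕ) * PowerSeries.mk (bb k))
            = catalan p.1 * bb (k + 1) p.2 := by
          intro p hp
          have hp2 : p.2 < m + 1 := by
            have := Finset.HasAntidiagonal.mem_antidiagonal.mp hp; omega
          rw [PowerSeries.coeff_mk, ih p.2 hp2 k]
        rw [Finset.sum_congr rfl h2, ← coeff_mk_mul, ih m (Nat.lt_succ_self m) (k + 1)]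
      rw [key, catalan_zero, one_mul, bb_pascal]

lemma mk_bb_succ (k : ℕ) :
    (PowerSeries.mk catalan : PowerSeries ℕ) * PowerSeries.mk (bb k) =
      PowerSeries.mk (bb (k + 1)) := by
  ext m
  rw [L m k, PowerSeries.coeff_mk]

/-- Peeling the first coordinate off a tuple antidiagonal sum. -/
lemma sum_antidiagonalTuple_succ {M : Type*} [AddCommMonoid M] (k m : ℕ)
    (F : (Fin (k + 1) → ℕ) → M) :
    ∑ c ∈ Finset.Nat.antidiagonalTuple (k + 1) m, F c
      = ∑ p ∈ Finset.HasAntidiagonal.antidiagonal m,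
          ∑ d ∈ Finset.Nat.antidiagonalTuple k p.2, F (Fin.cons p.1 d) := by
  rw [Finset.sum_sigma']
  refine Finset.sum_nbij'
    (fun c => ⟨(c 0, ∑ j : Fin k, c j.succ), Fin.tail c⟩)
    (fun x => Fin.cons x.1.1 x.2) ?_ ?_ ?_ ?_ ?_
  · intro c hc
    simp only [Finset.Nat.mem_antidiagonalTuple] at hc
    simp only [Finset.mem_sigma, Finset.HasAntidiagonal.mem_antidiagonal,
      Finset.Nat.mem_antidiagonalTuple]
    constructor
    · rw [← hc, Fin.sum_univ_succ]
    · rfl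
  · rintro ⟨⟨a, b⟩, d⟩ hx
    simp only [Finset.mem_sigma, Finset.HasAntidiagonal.mem_antidiagonal,
      Finset.Nat.mem_antidiagonalTuple] at hx ⊢
    rw [Fin.sum_univ_succ]
    simp only [Fin.cons_zero, Fin.cons_succ]
    rw [hx.2, hx.1]
  · intro c hc
    simp [Fin.cons_self_tail]
  · rintro ⟨⟨a, b⟩, d⟩ hx
    simp only [Finset.mem_sigma, Finset.HasAntidiagonal.mem_antidiagonal,
      Finset.Nat.mem_antidiagonalTuple] at hx
    simp only [Fin.cons_zero, Fin.cons_succ, Fin.tail_cons]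
    congr 2
    simp [hx.2]
  · intro c hc
    simp [Fin.cons_self_tail]

/-- Sums of products of Catalan numbers over tuple antidiagonals. -/
def hfun (k m : ℕ) : ℕ := ∑ d ∈ Finset.Nat.antidiagonalTuple k m, ∏ j : Fin k, catalan (d j)

lemma mk_hfun_succ (k : ℕ) :
    (PowerSeries.mk (hfun (k + 1)) : PowerSeries ℕ) =
      PowerSeries.mk catalan * PowerSeries.mk (hfun k) := by
  ext m
  rw [PowerSeries.coeff_mk, coeff_mk_mul]
  unfold hfun
  rw [sum_antidiagonalTuple_succ]
  refine Finset.sum_congr rfl fun p _ => ?_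
  rw [Finset.mul_sum]
  refine Finset.sum_congr rfl fun d _ => ?_
  rw [Fin.prod_univ_succ]
  simp

lemma mk_hfun_zero : (PowerSeries.mk (hfun 0) : PowerSeries ℕ) = 1 := by
  ext m
  match m with
  | 0 => simp [hfun]
  | m + 1 => simp [hfun, Finset.Nat.antidiagonalTuple_zero_succ]

lemma main_ps : ∀ k : ℕ,
    (PowerSeries.mk (bb 0) : PowerSeries ℕ) * PowerSeries.mk (hfun k) =
      PowerSeries.mk (bb k) := by
  intro k
  induction k with
  | zero => rw [mk_hfun_zero, mul_one]
  | succ k ih =>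
      rw [mk_hfun_succ, mul_comm (PowerSeries.mk catalan), ← mul_assoc, ih,
        mul_comm, mk_bb_succ]

/-- for `n ≥ k`, summing `binomial(2i_0, i_0)·C_{i_1}···C_{i_k}` over all
weak compositions `(i_0, i_1, …, i_k)` of `n − k` gives `binomial(2n−k, n)`. -/
theorem weak_composition_catalan_identity (n k : ℕ) (hkn : k ≤ n) :
    ∑ c ∈ Finset.Nat.antidiagonalTuple (k + 1) (n - k),
        (2 * c 0).choose (c 0) * ∏ j : Fin k, catalan (c j.succ) =
      (2 * n - k).choose n := by
  have hb : bb k (n - k) = (2 * n - k).choose n := by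
    unfold bb
    congr 1 <;> omega
  have h1 : ∑ c ∈ Finset.Nat.antidiagonalTuple (k + 1) (n - k),
        (2 * c 0).choose (c 0) * ∏ j : Fin k, catalan (c j.succ)
      = ∑ p ∈ Finset.HasAntidiagonal.antidiagonal (n - k), bb 0 p.1 * hfun k p.2 := by
    rw [sum_antidiagonalTuple_succ]
    refine Finset.sum_congr rfl fun p _ => ?_
    unfold hfun bb
    rw [Finset.mul_sum]
    refine Finset.sum_congr rfl fun d _ => ?_
    simp
  rw [h1, ← coeff_mk_mul (bb 0) (hfun k) (n - k), main_ps, PowerSeries.coeff_mk, hb]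
end

section
/- For every natural number n: ∑_{k=0}^{n} 2^k · binomial(2n−k, n−k) = 4^n. -/
open Finset

private def Tsum (n : ℕ) : ℕ := ∑ j ∈ Finset.range (n + 1), (n + j).choose j * 2 ^ (n - j)

private lemma Tsum_succ (n : ℕ) : Tsum (n + 1) = 4 * Tsum n := by
  set A : ℕ := ∑ i ∈ Finset.range (n + 1), (n + 1 + i).choose i * 2 ^ (n - i) with hA
  have eq1 : Tsum (n + 1) = 2 * A + (2 * n + 2).choose (n + 1) := by
    rw [Tsum, Finset.sum_range_succ]
    have h1 : ∑ j ∈ Finset.range (n + 1), (n + 1 + j).choose j * 2 ^ (n + 1 - j) = 2 * A := by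
      rw [hA, Finset.mul_sum]
      refine Finset.sum_congr rfl fun j hj => ?_
      have hj' : j ≤ n := Nat.lt_succ_iff.mp (Finset.mem_range.mp hj)
      have : n + 1 - j = (n - j) + 1 := by omega
      rw [this, pow_succ]
      ring
    rw [h1]
    have h2 : n + 1 + (n + 1) = 2 * n + 2 := by omega
    have h3 : n + 1 - (n + 1) = 0 := by omega
    rw [h2, h3, pow_zero, mul_one]
  have eq2 : Tsum (n + 1) = 2 * Tsum n + (2 * n + 1).choose (n + 1) + A := by
    have lhs : Tsum (n + 1) =
        (∑ i ∈ Finset.range (n + 1), (n + 1 + i).choose (i + 1) * 2 ^ (n - i)) + A + 2 ^ (n + 1) := by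
      rw [Tsum, Finset.sum_range_succ']
      have : ∀ i ∈ Finset.range (n + 1),
          (n + 1 + (i + 1)).choose (i + 1) * 2 ^ (n + 1 - (i + 1)) =
          (n + 1 + i).choose (i + 1) * 2 ^ (n - i) + (n + 1 + i).choose i * 2 ^ (n - i) := by
        intro i hi
        have h : n + 1 + (i + 1) = (n + 1 + i) + 1 := by omega
        rw [h, Nat.choose_succ_succ]
        have h2 : n + 1 - (i + 1) = n - i := by omega
        rw [h2]
        ring
      rw [Finset.sum_congr rfl this, Finset.sum_add_distrib]
      simp [hA]
    have rhs : 2 * Tsum n + (2 * n + 1).choose (n + 1) =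
        (∑ i ∈ Finset.range (n + 1), (n + 1 + i).choose (i + 1) * 2 ^ (n - i)) + 2 ^ (n + 1) := by
      have step : 2 * Tsum n + (2 * n + 1).choose (n + 1) =
          ∑ j ∈ Finset.range (n + 2), (n + j).choose j * 2 ^ (n + 1 - j) := by
        rw [Finset.sum_range_succ]
        congr 1
        · rw [Tsum, Finset.mul_sum]
          refine Finset.sum_congr rfl fun j hj => ?_
          have hj' : j ≤ n := Nat.lt_succ_iff.mp (Finset.mem_range.mp hj)
          have : n + 1 - j = (n - j) + 1 := by omega
          rw [this, pow_succ]
          ring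
        · have h3 : n + 1 - (n + 1) = 0 := by omega
          rw [h3, pow_zero, mul_one]
          congr 1
          omega
      rw [step, Finset.sum_range_succ']
      congr 1
      · refine Finset.sum_congr rfl fun i hi => ?_
        congr 1
        · congr 1
          omega
        · congr 1
          omega
      · simp
    omega
  have eq3 : (2 * n + 2).choose (n + 1) = 2 * (2 * n + 1).choose (n + 1) := by
    have h : (2 * n + 2) = (2 * n + 1) + 1 := by omega
    rw [h, Nat.choose_succ_succ]
    have hsym : (2 * n + 1).choose n = (2 * n + 1).choose (n + 1) := by
      have := Nat.choose_symm (n := 2 * n + 1) (k := n + 1) (by omega)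
      have h2 : 2 * n + 1 - (n + 1) = n := by omega
      rw [h2] at this
      exact this
    simp only [Nat.succ_eq_add_one] at *
    omega
  omega

private lemma Tsum_eq (n : ℕ) : Tsum n = 4 ^ n := by
  induction n with
  | zero => simp [Tsum]
  | succ n ih => rw [Tsum_succ, ih, pow_succ]; ring

/-- `∑_{k=0}^{n} 2^k·binomial(2n−k, n−k) = 4^n`. -/
theorem der_catalan_powers_of_two (n : ℕ) :
    ∑ k ∈ Finset.range (n + 1), 2 ^ k * (2 * n - k).choose (n - k) = 4 ^ n := by
  rw [← Tsum_eq n, Tsum]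
  rw [← Finset.sum_range_reflect (fun j => (n + j).choose j * 2 ^ (n - j)) (n + 1)]
  refine Finset.sum_congr rfl fun k hk => ?_
  have hk' : k ≤ n := Nat.lt_succ_iff.mp (Finset.mem_range.mp hk)
  have h1 : n + 1 - 1 - k = n - k := by omega
  have h2 : 2 * n - k = n + (n - k) := by omega
  have h3 : n - (n - k) = k := by omega
  rw [h1, h2, h3]
  ring
end

section
/- For every natural number n: ∑_{k=0}^{n} (k+1) · binomial(2n−k, n−k) = binomial(2n+2, n), and moreover binomial(2n+2, n) = (n+1)·catalan(n+1). -/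
/-- Hockey stick: `∑_{j=0}^{m} C(n+j, j) = C(n+m+1, m)`. -/
lemma hockey_stick (n m : ℕ) :
    ∑ j ∈ Finset.range (m + 1), (n + j).choose j = (n + m + 1).choose m := by
  induction m with
  | zero => simp
  | succ m ih =>
      rw [Finset.sum_range_succ, ih]
      have h1 : n + (m + 1) = (n + m) + 1 := by omega
      rw [h1]
      exact (Nat.choose_succ_succ (n + m + 1) m).symm

lemma aux2 (n m : ℕ) :
    ∑ j ∈ Finset.range (m + 1), (m + 1 - j) * (n + j).choose j =
      (n + m + 2).choose m := by
  induction m with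
  | zero => simp
  | succ m ih =>
      have hsplit : ∀ j ∈ Finset.range (m + 2),
          (m + 2 - j) * (n + j).choose j =
            (m + 1 - j) * (n + j).choose j + (n + j).choose j := by
        intro j hj
        rw [Finset.mem_range] at hj
        have : m + 2 - j = (m + 1 - j) + 1 := by omega
        rw [this, add_mul, one_mul]
      rw [Finset.sum_congr rfl hsplit, Finset.sum_add_distrib,
        Finset.sum_range_succ (fun j => (m + 1 - j) * (n + j).choose j), ih,
        hockey_stick n (m + 1)]
      simp only [Nat.sub_self, zero_mul, add_zero]
      have h1 : n + (m + 1) + 2 = (n + m + 2) + 1 := by omega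
      have h2 : n + (m + 1) + 1 = (n + m + 2) := by omega
      rw [h1, h2, Nat.choose_succ_succ (n + m + 2) m]

/-- `∑_{k=0}^{n} (k+1)·binomial(2n−k, n−k) = binomial(2n+2, n)`,
which also equals `(n+1)·catalan(n+1)`. -/
theorem der_catalan_naturals (n : ℕ) :
    (∑ k ∈ Finset.range (n + 1), (k + 1) * (2 * n - k).choose (n - k) =
        (2 * n + 2).choose n) ∧
      (2 * n + 2).choose n = (n + 1) * catalan (n + 1) := by
  constructor
  · have hrefl := Finset.sum_range_reflect
      (fun k => (k + 1) * (2 * n - k).choose (n - k)) (n + 1)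
    simp only [Nat.add_sub_cancel] at hrefl
    rw [← hrefl]
    have : ∀ j ∈ Finset.range (n + 1),
        (n - j + 1) * (2 * n - (n - j)).choose (n - (n - j)) =
          (n + 1 - j) * (n + j).choose j := by
      intro j hj
      rw [Finset.mem_range] at hj
      have h1 : 2 * n - (n - j) = n + j := by omega
      have h2 : n - (n - j) = j := by omega
      have h3 : n - j + 1 = n + 1 - j := by omega
      rw [h1, h2, h3]
    rw [Finset.sum_congr rfl this, aux2 n n]
    congr 1
    omega
  · have hc : (n + 2) * catalan (n + 1) = (2 * (n + 1)).choose (n + 1) := by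
      rw [← Nat.centralBinom]
      exact succ_mul_catalan_eq_centralBinom (n + 1)
    have hid := Nat.choose_succ_right_eq (2 * n + 2) n
    have h4 : 2 * n + 2 - n = n + 2 := by omega
    rw [h4] at hid
    have h5 : (2 * (n + 1)).choose (n + 1) = (2 * n + 2).choose (n + 1) := by
      ring_nf
    rw [h5] at hc
    have : (2 * n + 2).choose n * (n + 2) = (n + 1) * catalan (n + 1) * (n + 2) := by
      rw [← hid, ← hc]; ring
    exact Nat.eq_of_mul_eq_mul_right (by omega) this
end

section
/- For every natural number n: (n+2) · ∑_{k=0}^{n} (2k+1) · binomial(2n−k, n−k) = (3n+2) · binomial(2n+1, n+1). (Equivalently, ∑_{k=0}^{n} (2k+1)·binomial(2n−k, n−k) = ((3n+2)/(n+2))·binomial(2n+1, n+1), the number of positive clusters of type D_{n+2}.) -/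
open Finset

lemma hockey (r m : ℕ) : ∑ j ∈ range (m+1), (r+j).choose j = (r+m+1).choose m := by
  induction m with
  | zero => simp
  | succ m ih =>
    rw [sum_range_succ, ih]
    have h : (r+m+2).choose (m+1) = (r+m+1).choose m + (r+m+1).choose (m+1) :=
      Nat.choose_succ_succ (r+m+1) m
    have h2 : r + (m+1) = r + m + 1 := by ring
    rw [h2]
    exact h.symm

/-- `(n+2)·∑_{k=0}^{n} (2k+1)·binomial(2n−k, n−k) = (3n+2)·binomial(2n+1, n+1)`. -/
theorem der_catalan_odds (n : ℕ) :
    (n + 2) * ∑ k ∈ Finset.range (n + 1), (2 * k + 1) * (2 * n - k).choose (n - k) =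
      (3 * n + 2) * (2 * n + 1).choose (n + 1) := by
  -- reflect the sum
  have hrefl : ∑ k ∈ range (n+1), (2*k+1) * (2*n-k).choose (n-k)
      = ∑ j ∈ range (n+1), (2*(n-j)+1) * (n+j).choose j := by
    rw [← Finset.sum_range_reflect (fun k => (2*k+1) * (2*n-k).choose (n-k)) (n+1)]
    refine Finset.sum_congr rfl fun j hj => ?_
    have hj' : j ≤ n := by simpa [Nat.lt_succ_iff] using hj
    have e0 : n + 1 - 1 - j = n - j := by omega
    have h1 : 2*n - (n - j) = n + j := by omega
    have h2 : n - (n - j) = j := by omega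
    simp only [e0, h1, h2]
  rw [hrefl]
  set S := ∑ j ∈ range (n+1), (2*(n-j)+1) * (n+j).choose j with hS
  have hA : ∑ j ∈ range (n+1), (n+j).choose j = (2*n+1).choose n := by
    have := hockey n n
    simpa [two_mul] using this
  -- key: S + 2·B = (2n+1)·A
  have hkey : S + 2 * ∑ j ∈ range (n+1), j * (n+j).choose j
      = (2*n+1) * (2*n+1).choose n := by
    rw [hS, Finset.mul_sum, ← hA, Finset.mul_sum, ← Finset.sum_add_distrib]
    refine Finset.sum_congr rfl fun j hj => ?_
    have hj' : j ≤ n := by simpa [Nat.lt_succ_iff] using hj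
    have he : 2*(n-j) + 1 + 2*j = 2*n+1 := by omega
    calc (2*(n-j)+1) * (n+j).choose j + 2 * (j * (n+j).choose j)
        = (2*(n-j) + 1 + 2*j) * (n+j).choose j := by ring
      _ = (2*n+1) * (n+j).choose j := by rw [he]
  have hsym : (2*n+1).choose (n+1) = (2*n+1).choose n := by
    have h := Nat.choose_symm (show n+1 ≤ 2*n+1 by omega)
    rw [show 2*n+1-(n+1) = n from by omega] at h
    exact h.symm
  rw [hsym]
  rcases n with _ | m
  · simp [hS]
  · set n := m + 1 with hn
    -- B = (n+1)·C(2n+1, n−1)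
    have hB : ∑ j ∈ range (n+1), j * (n+j).choose j = (n+1) * (2*n+1).choose (n-1) := by
      rw [Finset.sum_range_succ']
      simp only [Nat.zero_mul, add_zero]
      have hterm : ∀ i, (i+1) * (n+(i+1)).choose (i+1) = (n+1) * ((n+1+i).choose i) := by
        intro i
        have h := Nat.choose_succ_right_eq (n+i+1) i
        rw [show n+i+1-i = n+1 from by omega] at h
        have harg : n + (i+1) = n + i + 1 := by ring
        have harg2 : n + 1 + i = n + i + 1 := by ring
        rw [harg, harg2, mul_comm (i+1), h, mul_comm]
      calc ∑ i ∈ range n, (i+1) * (n+(i+1)).choose (i+1)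
          = ∑ i ∈ range n, (n+1) * ((n+1+i).choose i) :=
            Finset.sum_congr rfl fun i _ => hterm i
        _ = (n+1) * ∑ i ∈ range n, (n+1+i).choose i := by rw [Finset.mul_sum]
        _ = (n+1) * (2*n+1).choose (n-1) := by
            have h := hockey (n+1) m
            rw [show n+1+m+1 = 2*n+1 from by omega,
              show (m:ℕ)+1 = n from rfl] at h
            rw [h, show n - 1 = m from by omega]
    -- absorption: (n+2)·C(2n+1, n−1) = n·C(2n+1, n)
    have habs : (n+2) * (2*n+1).choose (n-1) = n * (2*n+1).choose n := by
      have h := Nat.choose_succ_right_eq (2*n+1) (n-1)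
      rw [show n-1+1 = n from by omega, show 2*n+1-(n-1) = n+2 from by omega] at h
      calc (n+2) * (2*n+1).choose (n-1) = (2*n+1).choose (n-1) * (n+2) := mul_comm _ _
        _ = (2*n+1).choose n * n := h.symm
        _ = n * (2*n+1).choose n := mul_comm _ _
    set C := (2*n+1).choose n with hC
    set X := (2*n+1).choose (n-1) with hX
    rw [hB] at hkey
    have key2 : (n+2)*S + 2*(n+1)*((n+2)*X) = (n+2)*((2*n+1)*C) := by
      rw [← hkey]; ring
    rw [habs] at key2
    have final : (n+2)*S + 2*n*(n+1)*C = (3*n+2)*C + 2*n*(n+1)*C := by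
      rw [show (3*n+2)*C + 2*n*(n+1)*C = (n+2)*((2*n+1)*C) from by ring, ← key2]; ring
    exact Nat.add_right_cancel final
end
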